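/- arXiv:2502.21136 — 3 statements merged into one kernel-verified Lean document; each statement's English description precedes it below -/
import Mathlib

section
/- If r is the Gauss remainder of nonzero a, b ∈ ℤ[i], then ℓ₁(r) ≤ ℓ∞(b) and ℓ∞(r) ≤ ℓ₁(b)/2. -/
open GaussianInt

noncomputable section

/-- The sequence w: w_{2k} = 3·2^k, w_{2k+1} = 4·2^k. -/
def w (n : ℕ) : ℤ := if n % 2 = 0 then 3 * 2 ^ (n / 2) else 4 * 2 ^ (n / 2)

/-- 2-adic valuation of gcd(Re z, Im z). -/
def v2 (z : GaussianInt) : ℕ := padicValNat 2 (Int.gcd z.re z.im)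

/-- ℓ₁ norm. -/
def l1 (z : GaussianInt) : ℤ := |z.re| + |z.im|

/-- ℓ∞ norm. -/
def linf (z : GaussianInt) : ℤ := max |z.re| |z.im|

/-- m(z) = min(|Re z|, |Im z|). -/
def mm (z : GaussianInt) : ℤ := min |z.re| |z.im|

/-- The algebraic norm. -/
def Nm (z : GaussianInt) : ℤ := z.re ^ 2 + z.im ^ 2

/-- Graves' formula for the minimal Euclidean function φ on ℤ[i]. -/
def phi (z : GaussianInt) : ℕ :=
  let j := v2 z
  let n := sInf {n : ℕ | |z.re| ≤ 2 ^ j * (w n - 2) ∧ |z.im| ≤ 2 ^ j * (w n - 2)}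
  if l1 z ≤ 2 ^ j * (w (n + 1) - 3) then n + 2 * j else n + 2 * j + 1

/-- Nearest integer, rounding halves down. -/
def nint (x : ℚ) : ℤ := if x - ⌊x⌋ ≤ 1 / 2 then ⌊x⌋ else ⌈x⌉

/-- Gauss quotient: coordinatewise nearest-integer rounding of a·conj(b)/Nm(b). -/
def gq (a b : GaussianInt) : GaussianInt :=
  ⟨nint (((a.re * b.re + a.im * b.im : ℤ) : ℚ) / ((b.re ^ 2 + b.im ^ 2 : ℤ) : ℚ)),
   nint (((a.im * b.re - a.re * b.im : ℤ) : ℚ) / ((b.re ^ 2 + b.im ^ 2 : ℤ) : ℚ))⟩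

/-- Gauss remainder. -/
def gr (a b : GaussianInt) : GaussianInt := a - gq a b * b

/-- The imaginary unit in ℤ[i]. -/
def Ii : GaussianInt := ⟨0, 1⟩

/-- The canonical unit u_z. -/
def uz (z : GaussianInt) : GaussianInt :=
  if |z.re| > |z.im| then (if 0 < z.re then 1 else -1)
  else if |z.im| > |z.re| then (if 0 < z.im then -Ii else Ii)
  else if 0 < z.re then (if 0 < z.im then 1 else Ii)
  else (if 0 < z.im then -Ii else -1)

/-- s(z) = sgn(Im(u_z·z)). -/
def sfun (z : GaussianInt) : ℤ := Int.sign ((uz z * z).im)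


lemma nint_bound (x : ℚ) : |x - nint x| ≤ 1/2 := by
  unfold nint
  split_ifs with h
  · rw [abs_le]
    exact ⟨by linarith [Int.floor_le x], by linarith⟩
  · push_neg at h
    rw [abs_le]
    have h1 : (⌈x⌉ : ℚ) ≤ ⌊x⌋ + 1 := by
      exact_mod_cast Int.ceil_le_floor_add_one x
    exact ⟨by linarith, by linarith [Int.le_ceil x]⟩

lemma rem_bound (A N : ℤ) (hN : 0 < N) : 2 * |A - nint ((A:ℚ)/(N:ℚ)) * N| ≤ N := by
  have hNq : (0:ℚ) < (N:ℚ) := by exact_mod_cast hN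
  have h := nint_bound ((A:ℚ)/(N:ℚ))
  have h2 : |((A:ℤ):ℚ) - (nint ((A:ℚ)/(N:ℚ)) : ℚ) * N| ≤ N/2 := by
    have he : ((A:ℚ) - (nint ((A:ℚ)/(N:ℚ)) : ℚ) * N)
        = ((A:ℚ)/(N:ℚ) - nint ((A:ℚ)/(N:ℚ))) * N := by
      field_simp
    rw [he, abs_mul, abs_of_pos hNq]
    calc |(A:ℚ)/(N:ℚ) - nint ((A:ℚ)/(N:ℚ))| * N ≤ (1/2) * N :=
          mul_le_mul_of_nonneg_right h (le_of_lt hNq)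
      _ = N/2 := by ring
  have h3 : (2 * |A - nint ((A:ℚ)/(N:ℚ)) * N| : ℚ) ≤ (N:ℚ) := by push_cast; linarith [h2]
  exact_mod_cast h3

lemma key1 (u v x y N : ℤ) (hN : N = x^2+y^2) (hu : 2*|u| ≤ N) (hv : 2*|v| ≤ N) :
    |u*x - v*y| + |u*y + v*x| ≤ N * max |x| |y| := by
  have habs : ∀ A B : ℤ, |A| + |B| ≤ max |A+B| |A-B| := by
    intro A B; simp only [Int.abs_eq_natAbs]; omega
  have hxy : |x+y| + |x-y| ≤ 2 * max |x| |y| := by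
    simp only [Int.abs_eq_natAbs]; omega
  have hu0 : 0 ≤ |u| := abs_nonneg u
  have hv0 : 0 ≤ |v| := abs_nonneg v
  have h1 : 2 * |u*x - v*y + (u*y + v*x)| ≤ N * (|x+y| + |x-y|) := by
    have he : u*x - v*y + (u*y + v*x) = u*(x+y) + v*(x-y) := by ring
    rw [he]
    calc 2 * |u*(x+y) + v*(x-y)| ≤ 2 * (|u| * |x+y| + |v| * |x-y|) := by
          have := abs_add_le (u*(x+y)) (v*(x-y))
          rw [abs_mul, abs_mul] at this; linarith
      _ ≤ N*|x+y| + N*|x-y| := by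
          nlinarith [abs_nonneg (x+y), abs_nonneg (x-y)]
      _ = N * (|x+y| + |x-y|) := by ring
  have h2 : 2 * |u*x - v*y - (u*y + v*x)| ≤ N * (|x+y| + |x-y|) := by
    have he : u*x - v*y - (u*y + v*x) = u*(x-y) - v*(x+y) := by ring
    rw [he]
    calc 2 * |u*(x-y) - v*(x+y)| ≤ 2 * (|u| * |x-y| + |v| * |x+y|) := by
          have := abs_sub (u*(x-y)) (v*(x+y))
          rw [abs_mul, abs_mul] at this; linarith
      _ ≤ N*|x-y| + N*|x+y| := by
          nlinarith [abs_nonneg (x+y), abs_nonneg (x-y)]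
      _ = N * (|x+y| + |x-y|) := by ring
  have hN0 : 0 ≤ N := by nlinarith [sq_nonneg x, sq_nonneg y]
  have h3 := habs (u*x - v*y) (u*y + v*x)
  have h4 : N * (|x+y| + |x-y|) ≤ N * (2 * max |x| |y|) :=
    mul_le_mul_of_nonneg_left hxy hN0
  rcases max_cases |u*x - v*y + (u*y + v*x)| |u*x - v*y - (u*y + v*x)| with ⟨he, _⟩ | ⟨he, _⟩ <;>
    rw [he] at h3 <;> linarith

lemma key2 (u v x y N : ℤ) (hN : N = x^2+y^2) (hu : 2*|u| ≤ N) (hv : 2*|v| ≤ N) :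
    2 * max |u*x - v*y| |u*y + v*x| ≤ N * (|x| + |y|) := by
  have hN0 : 0 ≤ N := by nlinarith [sq_nonneg x, sq_nonneg y]
  have hu0 : 0 ≤ |u| := abs_nonneg u
  have hv0 : 0 ≤ |v| := abs_nonneg v
  have h1 : 2 * |u*x - v*y| ≤ N * (|x| + |y|) := by
    calc 2 * |u*x - v*y| ≤ 2 * (|u| * |x| + |v| * |y|) := by
          have := abs_sub (u*x) (v*y); rw [abs_mul, abs_mul] at this; linarith
      _ ≤ N*|x| + N*|y| := by nlinarith [abs_nonneg x, abs_nonneg y]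
      _ = N * (|x| + |y|) := by ring
  have h2 : 2 * |u*y + v*x| ≤ N * (|x| + |y|) := by
    calc 2 * |u*y + v*x| ≤ 2 * (|u| * |y| + |v| * |x|) := by
          have := abs_add_le (u*y) (v*x); rw [abs_mul, abs_mul] at this; linarith
      _ ≤ N*|y| + N*|x| := by nlinarith [abs_nonneg x, abs_nonneg y]
      _ = N * (|x| + |y|) := by ring
  rcases max_cases |u*x - v*y| |u*y + v*x| with ⟨he, _⟩ | ⟨he, _⟩ <;> rw [he] <;> linarith

theorem stmt2 (a b : GaussianInt) (ha : a ≠ 0) (hb : b ≠ 0) :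
    l1 (gr a b) ≤ linf b ∧ (linf (gr a b) : ℚ) ≤ (l1 b : ℚ) / 2 := by
  have hN : (0:ℤ) < b.re^2 + b.im^2 := by
    rcases Zsqrtd.ext_iff.not.mp hb with h
    simp only [Zsqrtd.re_zero, Zsqrtd.im_zero] at h
    rcases not_and_or.mp h with h | h <;> positivity
  have hu := rem_bound (a.re*b.re + a.im*b.im) (b.re^2+b.im^2) hN
  have hv := rem_bound (a.im*b.re - a.re*b.im) (b.re^2+b.im^2) hN
  have hqre : (gq a b).re
      = nint (((a.re * b.re + a.im * b.im : ℤ) : ℚ) / ((b.re ^ 2 + b.im ^ 2 : ℤ) : ℚ)) := rfl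
  have hqim : (gq a b).im
      = nint (((a.im * b.re - a.re * b.im : ℤ) : ℚ) / ((b.re ^ 2 + b.im ^ 2 : ℤ) : ℚ)) := rfl
  rw [← hqre] at hu
  rw [← hqim] at hv
  set u := a.re*b.re + a.im*b.im - (gq a b).re * (b.re^2+b.im^2) with hudef
  set v := a.im*b.re - a.re*b.im - (gq a b).im * (b.re^2+b.im^2) with hvdef
  set N := b.re^2 + b.im^2 with hNdef
  have e1 : (gr a b).re * N = u * b.re - v * b.im := by
    simp only [hudef, hvdef, hNdef, gr, Zsqrtd.re_sub, Zsqrtd.im_sub, Zsqrtd.re_mul,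
      Zsqrtd.im_mul]
    ring
  have e2 : (gr a b).im * N = u * b.im + v * b.re := by
    simp only [hudef, hvdef, hNdef, gr, Zsqrtd.re_sub, Zsqrtd.im_sub, Zsqrtd.re_mul,
      Zsqrtd.im_mul]
    ring
  have k1 := key1 u v b.re b.im N hNdef hu hv
  have k2 := key2 u v b.re b.im N hNdef hu hv
  rw [← e1, ← e2] at k1 k2
  have habsN : ∀ z : ℤ, |z * N| = |z| * N := by
    intro z; rw [abs_mul, abs_of_pos hN]
  rw [habsN, habsN] at k1 k2
  constructor
  · have : (|(gr a b).re| + |(gr a b).im|) * N ≤ (max |b.re| |b.im|) * N := by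
      rw [add_mul]; linarith [k1]
    have h5 := le_of_mul_le_mul_right this hN
    simpa [l1, linf] using h5
  · have hmax : max (|(gr a b).re| * N) (|(gr a b).im| * N)
        = max |(gr a b).re| |(gr a b).im| * N :=
      (max_mul_of_nonneg _ _ (le_of_lt hN)).symm
    rw [hmax] at k2
    have h6 : 2 * max |(gr a b).re| |(gr a b).im| ≤ |b.re| + |b.im| := by
      have h7 : (2 * max |(gr a b).re| |(gr a b).im|) * N ≤ (|b.re| + |b.im|) * N := by
        calc (2 * max |(gr a b).re| |(gr a b).im|) * N
            = 2 * (max |(gr a b).re| |(gr a b).im| * N) := by ring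
          _ ≤ N * (|b.re| + |b.im|) := k2
          _ = (|b.re| + |b.im|) * N := by ring
      exact le_of_mul_le_mul_right h7 hN
    have h8 : (2 * max |(gr a b).re| |(gr a b).im| : ℚ) ≤ ((|b.re| + |b.im| : ℤ) : ℚ) := by
      exact_mod_cast h6
    simp only [linf, l1]
    push_cast at h8 ⊢
    linarith
end
end

section
/- If r is the Gauss remainder of nonzero a, b ∈ ℤ[i] and the Gauss fractional remainder f = a/b - q satisfies Re(f), Im(f) ∈ {0, ±1/2} up to multiplication by a unit (i.e., r/b ∈ {±1/2, ±i/2, (±1±i)/2}), then r/b lies in the set of unit multiples of (1+i)⁻¹ and (1+i)⁻², and hence φ(r) ∈ {φ(b) - 1, φ(b) - 2}. -/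
open GaussianInt

noncomputable section

lemma w_two_mul (k : ℕ) : w (2 * k) = 3 * 2 ^ k := by
  simp [w, Nat.mul_mod_right, Nat.mul_div_cancel_left _ (by norm_num : 0 < 2)]

lemma w_add_two (n : ℕ) : w (n + 2) = 2 * w n := by
  unfold w
  rw [Nat.add_mod_right, Nat.add_div_right _ (by norm_num)]
  rcases Nat.decEq (n % 2) 0 with h|h <;> simp [h] <;> ring

lemma w_le_succ (n : ℕ) : w n ≤ w (n + 1) := by
  unfold w
  have hp : (0:ℤ) < 2 ^ (n / 2) := by positivity
  rcases Nat.even_or_odd n with ⟨k, hk⟩|⟨k, hk⟩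
  · have h0 : n % 2 = 0 := by omega
    have h1 : (n + 1) % 2 = 1 := by omega
    have h3 : (n + 1) / 2 = n / 2 := by omega
    simp only [h0, h1, h3, if_true, if_false, one_ne_zero]
    linarith
  · have h0 : n % 2 = 1 := by omega
    have h1 : (n + 1) % 2 = 0 := by omega
    have h3 : (n + 1) / 2 = n / 2 + 1 := by omega
    simp only [h0, h1, h3, if_true, if_false, one_ne_zero]
    rw [pow_succ]
    linarith

lemma w_mono : Monotone w := monotone_nat_of_le_succ w_le_succ

lemma w_ge3 (n : ℕ) : 3 ≤ w n := by
  have h0 : w 0 = 3 := by simp [w]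
  calc (3:ℤ) = w 0 := h0.symm
    _ ≤ w n := w_mono (Nat.zero_le n)

lemma w_even {n : ℕ} (h : 1 ≤ n) : 2 ∣ w n := by
  unfold w
  rcases Nat.even_or_odd n with ⟨k, hk⟩|⟨k, hk⟩
  · have hk1 : 1 ≤ k := by omega
    have h0 : n % 2 = 0 := by omega
    have h1 : n / 2 = k := by omega
    rw [if_pos h0, h1]
    obtain ⟨k', rfl⟩ : ∃ k', k = k' + 1 := ⟨k - 1, by omega⟩
    exact ⟨3 * 2 ^ k', by rw [pow_succ]; ring⟩
  · have h0 : n % 2 = 1 := by omega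
    rw [if_neg (by omega)]
    exact ⟨2 * 2 ^ (n/2), by ring⟩
lemma gcd_ne_zero {z : GaussianInt} (hz : z ≠ 0) : Int.gcd z.re z.im ≠ 0 := by
  rw [Ne, Int.gcd_eq_zero_iff]
  intro ⟨h1, h2⟩
  exact hz (by ext <;> simp [h1, h2])

lemma v2_eq_zero {z : GaussianInt} (h : ¬((2:ℤ) ∣ z.re ∧ (2:ℤ) ∣ z.im)) : v2 z = 0 := by
  apply padicValNat.eq_zero_of_not_dvd
  intro hd
  have h2 : ((2:ℤ)) ∣ (Int.gcd z.re z.im : ℤ) := Int.natCast_dvd_natCast.mpr hd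
  exact h ⟨h2.trans (Int.gcd_dvd_left _ _), h2.trans (Int.gcd_dvd_right _ _)⟩

-- phi evaluation helper
lemma phi_eval (z : GaussianInt) (n : ℕ)
    (h1 : |z.re| ≤ 2 ^ v2 z * (w n - 2) ∧ |z.im| ≤ 2 ^ v2 z * (w n - 2))
    (h2 : ∀ m < n, ¬(|z.re| ≤ 2 ^ v2 z * (w m - 2) ∧ |z.im| ≤ 2 ^ v2 z * (w m - 2))) :
    phi z = if l1 z ≤ 2 ^ v2 z * (w (n + 1) - 3) then n + 2 * v2 z else n + 2 * v2 z + 1 := by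
  have hn : sInf {m : ℕ | |z.re| ≤ 2 ^ v2 z * (w m - 2) ∧ |z.im| ≤ 2 ^ v2 z * (w m - 2)} = n := by
    apply le_antisymm (Nat.sInf_le h1)
    by_contra h
    push_neg at h
    have hne : {m : ℕ | |z.re| ≤ 2 ^ v2 z * (w m - 2) ∧ |z.im| ≤ 2 ^ v2 z * (w m - 2)}.Nonempty :=
      ⟨n, h1⟩
    exact h2 _ h (Nat.sInf_mem hne)
  simp only [phi, hn]

lemma phi_eval0 (z : GaussianInt) (h0 : v2 z = 0) (n : ℕ)
    (h1 : linf z ≤ w n - 2)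
    (h2 : ∀ m < n, w m - 2 < linf z) :
    phi z = if l1 z ≤ w (n + 1) - 3 then n else n + 1 := by
  have := phi_eval z n ?_ ?_
  · rw [h0] at this
    simpa using this
  · rw [h0]
    simp only [pow_zero, one_mul]
    exact ⟨le_trans (le_max_left _ _) h1, le_trans (le_max_right _ _) h1⟩
  · intro m hm
    rw [h0]
    simp only [pow_zero, one_mul]
    intro ⟨ha, hb⟩
    exact absurd (max_le ha hb) (not_le.mpr (h2 m hm))

lemma phi_eval1 (z : GaussianInt) (h0 : v2 z = 1) (n : ℕ)
    (h1 : linf z ≤ 2 * (w n - 2))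
    (h2 : ∀ m < n, 2 * (w m - 2) < linf z) :
    phi z = if l1 z ≤ 2 * (w (n + 1) - 3) then n + 2 else n + 3 := by
  have := phi_eval z n ?_ ?_
  · rw [h0] at this
    simpa using this
  · rw [h0]
    simp only [pow_one]
    exact ⟨le_trans (le_max_left _ _) h1, le_trans (le_max_right _ _) h1⟩
  · intro m hm
    rw [h0]
    simp only [pow_one]
    intro ⟨ha, hb⟩
    exact absurd (max_le ha hb) (not_le.mpr (h2 m hm))
lemma phi_congr {z y : GaussianInt}
    (h : (|z.re| = |y.re| ∧ |z.im| = |y.im|) ∨ (|z.re| = |y.im| ∧ |z.im| = |y.re|)) :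
    phi z = phi y := by
  have hgcd : Int.gcd z.re z.im = Int.gcd y.re y.im := by
    have e : ∀ a b : ℤ, |a| = |b| → a.natAbs = b.natAbs := by
      intro a b hab
      have : ((a.natAbs : ℤ)) = (b.natAbs : ℤ) := by
        rwa [← Int.abs_eq_natAbs, ← Int.abs_eq_natAbs]
      exact_mod_cast this
    rcases h with ⟨h1, h2⟩|⟨h1, h2⟩
    · unfold Int.gcd
      rw [e _ _ h1, e _ _ h2]
    · unfold Int.gcd
      rw [e _ _ h1, e _ _ h2, Nat.gcd_comm]
  have hv : v2 z = v2 y := by unfold v2; rw [hgcd]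
  have hl1 : l1 z = l1 y := by
    unfold l1
    rcases h with ⟨h1, h2⟩|⟨h1, h2⟩ <;> rw [h1, h2]
    ring
  have hset : {n : ℕ | |z.re| ≤ 2 ^ v2 z * (w n - 2) ∧ |z.im| ≤ 2 ^ v2 z * (w n - 2)}
      = {n : ℕ | |y.re| ≤ 2 ^ v2 y * (w n - 2) ∧ |y.im| ≤ 2 ^ v2 y * (w n - 2)} := by
    ext m
    rw [hv] at *
    rcases h with ⟨h1, h2⟩|⟨h1, h2⟩ <;> rw [Set.mem_setOf_eq, Set.mem_setOf_eq, h1, h2]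
    exact and_comm
  simp only [phi]
  rw [hset, hv, hl1]

lemma phi_neg (z : GaussianInt) : phi (-z) = phi z :=
  phi_congr (Or.inl ⟨by simp, by simp⟩)

lemma phi_Imul (z : GaussianInt) : phi (Ii * z) = phi z := by
  have h1 : (Ii * z).re = -z.im := by simp [Ii, Zsqrtd.re_mul]
  have h2 : (Ii * z).im = z.re := by simp [Ii, Zsqrtd.im_mul]
  exact phi_congr (Or.inr ⟨by rw [h1]; simp, by rw [h2]⟩)

lemma phi_two_mul (z : GaussianInt) (hz : z ≠ 0) : phi (2 * z) = phi z + 2 := by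
  have hre : (2 * z).re = 2 * z.re := by simp [Zsqrtd.re_mul]
  have him : (2 * z).im = 2 * z.im := by simp [Zsqrtd.im_mul]
  have hv : v2 (2 * z) = v2 z + 1 := by
    unfold v2
    rw [hre, him, Int.gcd_mul_left]
    show padicValNat 2 ((2:ℤ).natAbs * Int.gcd z.re z.im) = _
    rw [show (2:ℤ).natAbs = 2 from rfl,
      padicValNat.mul (by norm_num) (gcd_ne_zero hz), padicValNat.self one_lt_two]
    omega
  have habs : ∀ c : ℤ, |2 * c| = 2 * |c| := fun c => by rw [abs_mul]; norm_num
  have hset : {n : ℕ | |(2*z).re| ≤ 2 ^ v2 (2*z) * (w n - 2) ∧ |(2*z).im| ≤ 2 ^ v2 (2*z) * (w n - 2)}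
      = {n : ℕ | |z.re| ≤ 2 ^ v2 z * (w n - 2) ∧ |z.im| ≤ 2 ^ v2 z * (w n - 2)} := by
    ext m
    rw [Set.mem_setOf_eq, Set.mem_setOf_eq, hre, him, hv, habs, habs, pow_succ,
      mul_comm (2 ^ v2 z) 2, mul_assoc]
    constructor <;> intro ⟨ha, hb⟩ <;> constructor <;> linarith
  have hl1 : l1 (2 * z) = 2 * l1 z := by
    unfold l1
    rw [hre, him, habs, habs]
    ring
  simp only [phi]
  rw [hset, hv, hl1]
  generalize sInf {n : ℕ | |z.re| ≤ 2 ^ v2 z * (w n - 2) ∧ |z.im| ≤ 2 ^ v2 z * (w n - 2)} = N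
  rw [pow_succ, mul_comm (2 ^ v2 z) 2, mul_assoc]
  rcases le_or_gt (l1 z) (2 ^ v2 z * (w (N + 1) - 3)) with h|h
  · rw [if_pos (by linarith), if_pos h]
    ring
  · rw [if_neg (by intro hc; linarith), if_neg (not_le.mpr h)]
    ring
lemma parity_abs (a : ℤ) : (2 ∣ |a|) ↔ (2 ∣ a) := by
  rcases abs_cases a with ⟨h,_⟩|⟨h,_⟩ <;> rw [h] <;> omega

lemma abs_max_add (a b : ℤ) : max |a-b| |a+b| = |a| + |b| := by
  rcases abs_cases a with ⟨h1,h1'⟩|⟨h1,h1'⟩ <;> rcases abs_cases b with ⟨h2,h2'⟩|⟨h2,h2'⟩ <;>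
  rcases abs_cases (a-b) with ⟨h3,h3'⟩|⟨h3,h3'⟩ <;> rcases abs_cases (a+b) with ⟨h4,h4'⟩|⟨h4,h4'⟩ <;>
  rcases max_cases |a-b| |a+b| with ⟨h5,h5'⟩|⟨h5,h5'⟩ <;> linarith

lemma abs_sum_add (a b : ℤ) : |a-b| + |a+b| = 2 * max |a| |b| := by
  rcases abs_cases a with ⟨h1,h1'⟩|⟨h1,h1'⟩ <;> rcases abs_cases b with ⟨h2,h2'⟩|⟨h2,h2'⟩ <;>
  rcases abs_cases (a-b) with ⟨h3,h3'⟩|⟨h3,h3'⟩ <;> rcases abs_cases (a+b) with ⟨h4,h4'⟩|⟨h4,h4'⟩ <;>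
  rcases max_cases |a| |b| with ⟨h5,h5'⟩|⟨h5,h5'⟩ <;> linarith

lemma exists_w_ge (c : ℤ) : ∃ n : ℕ, c ≤ w n - 2 := by
  rcases le_or_gt c 1 with h|h
  · exact ⟨0, by simp [w]; omega⟩
  · refine ⟨2 * c.toNat, ?_⟩
    rw [w_two_mul]
    have h1 : (c.toNat : ℤ) = c := Int.toNat_of_nonneg (by omega)
    have h2 : (c.toNat : ℤ) < 2 ^ c.toNat := by exact_mod_cast Nat.lt_two_pow_self (n := c.toNat)
    have h3 : (1:ℤ) ≤ 2 ^ c.toNat := one_le_pow₀ (by norm_num)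
    linarith

lemma linf_ge_one {z : GaussianInt} (hz : z ≠ 0) : 1 ≤ linf z := by
  rcases (by rwa [Ne, Zsqrtd.ext_iff, not_and_or] at hz : z.re ≠ 0 ∨ z.im ≠ 0) with h|h
  · exact le_max_of_le_left (Int.one_le_abs h)
  · exact le_max_of_le_right (Int.one_le_abs h)

lemma one_add_Ii_ne : (1 + Ii) ≠ 0 := by
  intro h
  have := congrArg Zsqrtd.im h
  simp [Ii] at this
lemma phi_omul_aux : ∀ g : ℕ, ∀ z : GaussianInt, Int.gcd z.re z.im = g → z ≠ 0 →
    phi ((1 + Ii) * z) = phi z + 1 := by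
  intro g
  induction g using Nat.strong_induction_on with
  | _ g ih =>
  intro z hg hz
  have hre' : ((1 + Ii) * z).re = z.re - z.im := by simp [Ii, Zsqrtd.re_mul]; ring
  have him' : ((1 + Ii) * z).im = z.re + z.im := by simp [Ii, Zsqrtd.im_mul]; ring
  by_cases hpar : (2:ℤ) ∣ z.re ∧ (2:ℤ) ∣ z.im
  · -- both coordinates even: induct
    obtain ⟨c, hc⟩ := hpar.1
    obtain ⟨d, hd⟩ := hpar.2
    have hzz : z = 2 * (⟨c, d⟩ : GaussianInt) := by
      ext <;> simp [Zsqrtd.re_mul, Zsqrtd.im_mul] <;> [exact hc; exact hd]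
    set z₂ : GaussianInt := ⟨c, d⟩ with hz₂def
    have hz₂0 : z₂ ≠ 0 := by
      intro h0
      exact hz (by rw [hzz, h0, mul_zero])
    have hgcd2 : g = 2 * Int.gcd z₂.re z₂.im := by
      rw [← hg, hzz]
      show Int.gcd (2 * z₂).re (2 * z₂).im = _
      have h1 : (2 * z₂).re = 2 * z₂.re := by simp [Zsqrtd.re_mul]
      have h2 : (2 * z₂).im = 2 * z₂.im := by simp [Zsqrtd.im_mul]
      rw [h1, h2, Int.gcd_mul_left]
      rfl
    have hlt : Int.gcd z₂.re z₂.im < g := by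
      have hg0 : g ≠ 0 := by rw [← hg]; exact gcd_ne_zero hz
      omega
    have h1 : (1 + Ii) * z = 2 * ((1 + Ii) * z₂) := by rw [hzz]; ring
    rw [h1, phi_two_mul _ (mul_ne_zero one_add_Ii_ne hz₂0), ih _ hlt z₂ rfl hz₂0, hzz,
      phi_two_mul _ hz₂0]
  · -- core case: not both even
    have hv0 : v2 z = 0 := v2_eq_zero hpar
    have hM1 : 1 ≤ linf z := linf_ge_one hz
    have hMl1 : linf z ≤ l1 z := by
      unfold linf l1
      exact max_le (le_add_of_nonneg_right (abs_nonneg _)) (le_add_of_nonneg_left (abs_nonneg _))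
    have hmaxmin : linf z + mm z = l1 z := max_add_min _ _
    have hmmM : mm z ≤ linf z := min_le_max
    -- the index n for z
    obtain ⟨n, hmem, hmin⟩ : ∃ n : ℕ, linf z ≤ w n - 2 ∧ ∀ m, m < n → w m - 2 < linf z := by
      have hSne : {m : ℕ | linf z ≤ w m - 2}.Nonempty := exists_w_ge (linf z)
      refine ⟨sInf {m : ℕ | linf z ≤ w m - 2}, Nat.sInf_mem hSne, ?_⟩
      intro m hm
      have h := Nat.notMem_of_lt_sInf hm
      simp only [Set.mem_setOf_eq] at h
      omega
    have hphiz : phi z = if l1 z ≤ w (n+1) - 3 then n else n + 1 := phi_eval0 z hv0 n hmem hmin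
    have hlinf' : linf ((1+Ii)*z) = l1 z := by
      unfold linf l1
      rw [hre', him']
      exact abs_max_add _ _
    have hl1' : l1 ((1+Ii)*z) = 2 * linf z := by
      unfold l1 linf
      rw [hre', him']
      exact abs_sum_add _ _
    have hw0 : w 0 = 3 := by simp [w]
    have hw1 : w 1 = 4 := by simp [w]
    by_cases hab : (2:ℤ) ∣ (z.re + z.im)
    · -- CASE B : both coordinates odd
      have hoa : ¬ (2:ℤ) ∣ z.re := by
        rcases not_and_or.mp hpar with h|h
        · exact h
        · intro h2; exact h (by omega)
      have hob : ¬ (2:ℤ) ∣ z.im := by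
        rcases not_and_or.mp hpar with h|h
        · intro h2; exact h (by omega)
        · exact h
      have hModd : ¬ 2 ∣ linf z := by
        unfold linf
        rcases max_cases |z.re| |z.im| with ⟨h,_⟩|⟨h,_⟩ <;> rw [h, parity_abs] <;> assumption
      have hmge1 : 1 ≤ mm z :=
        le_min (Int.one_le_abs (fun h => hoa (h ▸ dvd_zero 2)))
          (Int.one_le_abs (fun h => hob (h ▸ dvd_zero 2)))
      have hl1even : 2 ∣ l1 z := by
        unfold l1
        have pa : (2 ∣ |z.re|) ↔ 2 ∣ z.re := parity_abs _
        have pb : (2 ∣ |z.im|) ↔ 2 ∣ z.im := parity_abs _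
        rcases abs_cases z.re with ⟨h1,_⟩|⟨h1,_⟩ <;> rcases abs_cases z.im with ⟨h2,_⟩|⟨h2,_⟩ <;>
          rw [h1, h2] <;> omega
      -- v2 of (1+Ii)z is 1
      obtain ⟨cc, hcc⟩ : (2:ℤ) ∣ (z.re - z.im) := by omega
      obtain ⟨dd, hdd⟩ := hab
      have hv1 : v2 ((1+Ii)*z) = 1 := by
        unfold v2
        rw [hre', him', hcc, hdd, Int.gcd_mul_left]
        show padicValNat 2 ((2:ℤ).natAbs * Int.gcd cc dd) = 1
        have hccdd : cc + dd = z.re := by omega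
        have hg' : ¬ 2 ∣ Int.gcd cc dd := by
          intro hdvd
          have h2 : ((2:ℤ)) ∣ (Int.gcd cc dd : ℤ) := Int.natCast_dvd_natCast.mpr hdvd
          have h3 : (2:ℤ) ∣ cc := h2.trans (Int.gcd_dvd_left _ _)
          have h4 : (2:ℤ) ∣ dd := h2.trans (Int.gcd_dvd_right _ _)
          exact hoa (by omega)
        have hgne : Int.gcd cc dd ≠ 0 := by
          intro h0
          rw [Int.gcd_eq_zero_iff] at h0
          exact hoa (by omega)
        rw [show (2:ℤ).natAbs = 2 from rfl, padicValNat.mul (by norm_num) hgne,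
          padicValNat.self one_lt_two, padicValNat.eq_zero_of_not_dvd hg']
      -- the index n' for (1+Ii)z
      obtain ⟨n', hmem', hmin'⟩ :
          ∃ k : ℕ, l1 z ≤ 2 * (w k - 2) ∧ ∀ m, m < k → 2 * (w m - 2) < l1 z := by
        have hS'ne : {m : ℕ | l1 z ≤ 2 * (w m - 2)}.Nonempty := by
          obtain ⟨m, hm⟩ := exists_w_ge (l1 z)
          refine ⟨m, ?_⟩
          show l1 z ≤ 2 * (w m - 2)
          have := w_ge3 m
          omega
        refine ⟨sInf {m : ℕ | l1 z ≤ 2 * (w m - 2)}, Nat.sInf_mem hS'ne, ?_⟩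
        intro m hm
        have h := Nat.notMem_of_lt_sInf hm
        simp only [Set.mem_setOf_eq] at h
        omega
      have hphiz' : phi ((1+Ii)*z) =
          if 2 * linf z ≤ 2 * (w (n'+1) - 3) then n' + 2 else n' + 3 := by
        have := phi_eval1 ((1+Ii)*z) hv1 n' (by rw [hlinf']; exact hmem')
          (by intro m hm; rw [hlinf']; exact hmin' m hm)
        rwa [hl1'] at this
      by_cases hB : l1 z ≤ w (n+1) - 3
      · -- subcase B1 : phi z = n
        have hn1 : 1 ≤ n := by
          by_contra h0
          have hn0 : n = 0 := by omega
          rw [hn0, hw1] at hB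
          rw [hn0, hw0] at hmem
          omega
        obtain ⟨n₀, rfl⟩ : ∃ n₀, n = n₀ + 1 := ⟨n - 1, by omega⟩
        have hMle : linf z ≤ w (n₀+1) - 3 := by
          have he := w_even (show 1 ≤ n₀ + 1 by omega)
          omega
        have hwn : w (n₀ + 1 + 1) = 2 * w n₀ := by
          rw [show n₀ + 1 + 1 = n₀ + 2 by omega]
          exact w_add_two n₀
        have hminn₀ : w n₀ - 2 < linf z := hmin n₀ (by omega)
        have hn'le : n' ≤ n₀ := by
          by_contra h0
          have := hmin' n₀ (by omega)
          omega
        have hn'ge : n₀ ≤ n' + 1 := by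
          by_contra h0
          have h1 : n' + 2 ≤ n₀ := by omega
          have h2 : w (n'+2) ≤ w n₀ := w_mono h1
          have h3 : w (n'+2) = 2 * w n' := w_add_two n'
          have h4 := hmem'
          omega
        have : n' = n₀ ∨ n₀ = n' + 1 := by omega
        rcases this with h|h
        · subst h
          rw [hphiz', if_pos (by omega), hphiz, if_pos hB]
        · rw [hphiz', if_neg ?_, hphiz, if_pos hB]
          · omega
          · have h5 : w (n'+1) - 2 < linf z := by rw [h] at hminn₀; exact hminn₀
            omega
      · -- subcase B2 : phi z = n + 1
        have hn'le : n' ≤ n := by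
          by_contra h0
          have := hmin' n (by omega)
          omega
        have hn'eq : n' = n := by
          rcases Nat.eq_zero_or_pos n with h0|h0
          · omega
          · obtain ⟨n₀, rfl⟩ : ∃ n₀, n = n₀ + 1 := ⟨n - 1, by omega⟩
            by_contra hne
            have h1 : n' ≤ n₀ := by omega
            have h2 : w n' ≤ w n₀ := w_mono h1
            have h3 : w (n₀ + 1 + 1) = 2 * w n₀ := by
              rw [show n₀ + 1 + 1 = n₀ + 2 by omega]
              exact w_add_two n₀
            have h4 := hmem'
            have h5 : w (n₀ + 1) ≤ w (n₀ + 1 + 1) := w_le_succ (n₀ + 1)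
            omega
        subst hn'eq
        have hcond : linf z ≤ w (n'+1) - 3 := by
          rcases Nat.eq_zero_or_pos n' with h0|h0
          · subst h0
            rw [hw0] at hmem
            rw [hw1]
            omega
          · obtain ⟨n₀, rfl⟩ : ∃ n₀, n' = n₀ + 1 := ⟨n' - 1, by omega⟩
            have he := w_even (show 1 ≤ n₀ + 1 by omega)
            have h5 : w (n₀ + 1) ≤ w (n₀ + 1 + 1) := w_le_succ (n₀ + 1)
            omega
        rw [hphiz', if_pos (by omega), hphiz, if_neg hB]
    · -- CASE A : z.re + z.im odd
      have hv1' : v2 ((1+Ii)*z) = 0 := by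
        apply v2_eq_zero
        rw [hre', him']
        intro ⟨h1, h2⟩
        exact hab h2
      have hsodd : ¬ 2 ∣ l1 z := by
        unfold l1
        have pa : (2 ∣ |z.re|) ↔ 2 ∣ z.re := parity_abs _
        have pb : (2 ∣ |z.im|) ↔ 2 ∣ z.im := parity_abs _
        rcases abs_cases z.re with ⟨h1,_⟩|⟨h1,_⟩ <;> rcases abs_cases z.im with ⟨h2,_⟩|⟨h2,_⟩ <;>
          rw [h1, h2] <;> omega
      obtain ⟨n', hmem', hmin'⟩ :
          ∃ k : ℕ, l1 z ≤ w k - 2 ∧ ∀ m, m < k → w m - 2 < l1 z := by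
        have hS'ne : {m : ℕ | l1 z ≤ w m - 2}.Nonempty := exists_w_ge (l1 z)
        refine ⟨sInf {m : ℕ | l1 z ≤ w m - 2}, Nat.sInf_mem hS'ne, ?_⟩
        intro m hm
        have h := Nat.notMem_of_lt_sInf hm
        simp only [Set.mem_setOf_eq] at h
        omega
      have hphiz' : phi ((1+Ii)*z) =
          if 2 * linf z ≤ w (n'+1) - 3 then n' else n' + 1 := by
        have := phi_eval0 ((1+Ii)*z) hv1' n' (by rw [hlinf']; exact hmem')
          (by intro m hm; rw [hlinf']; exact hmin' m hm)
        rwa [hl1'] at this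
      have hn'gen : n ≤ n' := by
        by_contra h0
        have h1 := hmin n' (by omega)
        omega
      by_cases hB : l1 z ≤ w (n+1) - 3
      · -- subcase A1 : phi z = n
        have hn'le : n' ≤ n + 1 := by
          by_contra h0
          have := hmin' (n+1) (by omega)
          omega
        have : n' = n ∨ n' = n + 1 := by omega
        rcases this with h|h
        · subst h
          rw [hphiz', if_neg ?_, hphiz, if_pos hB]
          rcases Nat.eq_zero_or_pos n' with h0|h0
          · subst h0
            rw [hw0] at hmem
            rw [hw1]
            omega
          · obtain ⟨n₀, rfl⟩ : ∃ n₀, n' = n₀ + 1 := ⟨n' - 1, by omega⟩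
            have h1 := hmin n₀ (by omega)
            have h3 : w (n₀ + 1 + 1) = 2 * w n₀ := by
              rw [show n₀ + 1 + 1 = n₀ + 2 by omega]
              exact w_add_two n₀
            omega
        · subst h
          rw [hphiz', if_pos ?_, hphiz, if_pos hB]
          have h3 : w (n + 1 + 1) = 2 * w n := by
            rw [show n + 1 + 1 = n + 2 by omega]
            exact w_add_two n
          omega
      · -- subcase A2 : phi z = n + 1
        have hseven : 2 ∣ (w (n+1) - 2) := by
          have := w_even (show 1 ≤ n + 1 by omega)
          omega
        have hn'ge2 : n + 2 ≤ n' := by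
          by_contra h0
          have h1 : n' ≤ n + 1 := by omega
          have h2 : w n' ≤ w (n+1) := w_mono h1
          omega
        have hn'le2 : n' ≤ n + 2 := by
          by_contra h0
          have := hmin' (n+2) (by omega)
          have h3 : w (n+2) = 2 * w n := w_add_two n
          omega
        have hn'eq : n' = n + 2 := by omega
        subst hn'eq
        rw [hphiz', if_pos ?_, hphiz, if_neg hB]
        have h3 : w (n + 2 + 1) = 2 * w (n + 1) := by
          rw [show n + 2 + 1 = (n + 1) + 2 by omega]
          exact w_add_two (n + 1)
        have h5 := w_le_succ n
        omega

lemma phi_omul (z : GaussianInt) (hz : z ≠ 0) : phi ((1 + Ii) * z) = phi z + 1 :=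
  phi_omul_aux _ z rfl hz
lemma hI2' : Ii * Ii = -1 := by ext <;> simp [Ii]

lemma hsq' : (1 + Ii) ^ 2 = 2 * Ii := by
  rw [pow_two]; ext <;> simp [Ii, Zsqrtd.re_mul, Zsqrtd.im_mul]

lemma isUnit_Ii : IsUnit Ii := IsUnit.of_mul_eq_one (a := Ii) (-Ii) (by
  have := hI2'
  linear_combination -this)

lemma phi_two_mul' (z : GaussianInt) (hz : z ≠ 0) : phi (2 * z) = phi z + 2 := phi_two_mul z hz

theorem stmt3 (a b r : GaussianInt) (ha : a ≠ 0) (hb : b ≠ 0) (hr : r = gr a b)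
    (hhalf : ∃ c ∈ ({1, -1, Ii, -Ii, 1 + Ii, 1 - Ii, -1 + Ii, -1 - Ii} : Set GaussianInt),
      2 * r = c * b) :
    (∃ u : GaussianInt, IsUnit u ∧ (r * (1 + Ii) = u * b ∨ r * (1 + Ii) ^ 2 = u * b)) ∧
    (phi r + 1 = phi b ∨ phi r + 2 = phi b) := by
  obtain ⟨c, hc, h2r⟩ := hhalf
  simp only [Set.mem_insert_iff, Set.mem_singleton_iff] at hc
  have hI2 : Ii * Ii = -1 := hI2'
  have hsq : (1 + Ii) ^ 2 = 2 * Ii := hsq'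
  have h1pI : (1 + Ii) ≠ 0 := one_add_Ii_ne
  have h1mI : (1 - Ii) ≠ 0 := by
    intro h
    have := congrArg Zsqrtd.im h
    simp [Ii] at this
  have hm1pI : (-1 + Ii) ≠ 0 := by
    intro h
    have := congrArg Zsqrtd.im h
    simp [Ii] at this
  have hm1mI : (-1 - Ii) ≠ 0 := by
    intro h
    have := congrArg Zsqrtd.im h
    simp [Ii] at this
  have hIne : Ii ≠ 0 := by
    intro h
    have := congrArg Zsqrtd.im h
    simp [Ii] at this
  rcases hc with rfl|rfl|rfl|rfl|rfl|rfl|rfl|rfl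
  · -- c = 1
    have hb' : b = 2 * r := by linear_combination -h2r
    have hr0 : r ≠ 0 := by
      intro h0
      exact hb (by rw [hb', h0, mul_zero])
    refine ⟨⟨Ii, isUnit_Ii, Or.inr ?_⟩, Or.inr ?_⟩
    · rw [hsq, hb']; ring
    · rw [hb', phi_two_mul' r hr0]
  · -- c = -1
    have hb' : b = -(2 * r) := by linear_combination h2r
    have hr0 : r ≠ 0 := by
      intro h0
      exact hb (by rw [hb', h0, mul_zero, neg_zero])
    refine ⟨⟨-Ii, isUnit_Ii.neg, Or.inr ?_⟩, Or.inr ?_⟩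
    · rw [hsq, hb']; ring
    · rw [hb', phi_neg, phi_two_mul' r hr0]
  · -- c = Ii
    have hb' : b = -(Ii * (2 * r)) := by linear_combination Ii * h2r + b * hI2
    have hr0 : r ≠ 0 := by
      intro h0
      exact hb (by rw [hb', h0, mul_zero, mul_zero, neg_zero])
    refine ⟨⟨-1, (isUnit_one).neg, Or.inr ?_⟩, Or.inr ?_⟩
    · rw [hsq, hb']; ring
    · rw [hb', phi_neg, phi_Imul, phi_two_mul' r hr0]
  · -- c = -Ii
    have hb' : b = Ii * (2 * r) := by linear_combination -Ii * h2r + b * hI2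
    have hr0 : r ≠ 0 := by
      intro h0
      exact hb (by rw [hb', h0, mul_zero, mul_zero])
    refine ⟨⟨1, isUnit_one, Or.inr ?_⟩, Or.inr ?_⟩
    · rw [hsq, hb']; ring
    · rw [hb', phi_Imul, phi_two_mul' r hr0]
  · -- c = 1 + Ii
    have hb' : b = (1 - Ii) * r := by
      apply mul_left_cancel₀ h1pI
      rw [← h2r]
      linear_combination r * hI2
    have hr0 : r ≠ 0 := by
      intro h0
      exact hb (by rw [hb', h0, mul_zero])
    have hb'' : b = -(Ii * ((1 + Ii) * r)) := by
      rw [hb']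
      linear_combination r * hI2
    refine ⟨⟨Ii, isUnit_Ii, Or.inl ?_⟩, Or.inl ?_⟩
    · rw [hb']; linear_combination r * hI2
    · rw [hb'', phi_neg, phi_Imul, phi_omul r hr0]
  · -- c = 1 - Ii
    have hb' : b = (1 + Ii) * r := by
      apply mul_left_cancel₀ h1mI
      rw [← h2r]
      linear_combination r * hI2
    have hr0 : r ≠ 0 := by
      intro h0
      exact hb (by rw [hb', h0, mul_zero])
    refine ⟨⟨1, isUnit_one, Or.inl ?_⟩, Or.inl ?_⟩
    · rw [hb']; ring
    · rw [hb', phi_omul r hr0]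
  · -- c = -1 + Ii
    have hb' : b = -((1 + Ii) * r) := by
      apply mul_left_cancel₀ hm1pI
      rw [← h2r]
      linear_combination r * hI2
    have hr0 : r ≠ 0 := by
      intro h0
      exact hb (by rw [hb', h0, mul_zero, neg_zero])
    refine ⟨⟨-1, isUnit_one.neg, Or.inl ?_⟩, Or.inl ?_⟩
    · rw [hb']; ring
    · rw [hb', phi_neg, phi_omul r hr0]
  · -- c = -1 - Ii
    have hb' : b = Ii * ((1 + Ii) * r) := by
      apply mul_left_cancel₀ hm1mI
      rw [← h2r]
      linear_combination (Ii + 2) * r * hI2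
    have hr0 : r ≠ 0 := by
      intro h0
      exact hb (by rw [hb', h0, mul_zero, mul_zero])
    refine ⟨⟨-Ii, isUnit_Ii.neg, Or.inl ?_⟩, Or.inl ?_⟩
    · rw [hb']; linear_combination (1 + Ii) * r * hI2
    · rw [hb', phi_Imul, phi_omul r hr0]
end
end

section
/- If z ∈ ℤ[i] is nonzero and φ(z) > n - 1, then ℓ∞(z) > w_{n-1} - 2^{v₂(z)+1} or ℓ₁(z) > wₙ - 3·2^{v₂(z)}, and conversely. -/
open GaussianInt

noncomputable section

lemma w_shift (m j : ℕ) : w (m + 2 * j) = 2 ^ j * w m := by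
  induction j with
  | zero => simp
  | succ k ih =>
      have : m + 2 * (k + 1) = (m + 2 * k) + 2 := by omega
      rw [this, w_add_two, ih, pow_succ]
      ring

lemma l1_le_two_linf (z : GaussianInt) : l1 z ≤ 2 * linf z := by
  have h1 := le_max_left |z.re| |z.im|
  have h2 := le_max_right |z.re| |z.im|
  unfold l1 linf
  linarith

lemma linf_pos (z : GaussianInt) (hz : z ≠ 0) : 0 < linf z := by
  have h : z.re ≠ 0 ∨ z.im ≠ 0 := by
    by_contra h
    push_neg at h
    exact hz (Zsqrtd.ext (by simpa using h.1) (by simpa using h.2))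
  unfold linf
  rcases h with h | h
  · exact lt_of_lt_of_le (abs_pos.mpr h) (le_max_left _ _)
  · exact lt_of_lt_of_le (abs_pos.mpr h) (le_max_right _ _)


theorem stmt6 (z : GaussianInt) (hz : z ≠ 0) (n : ℕ) (hn : 1 ≤ n) :
    phi z > n - 1 ↔
      (linf z > w (n - 1) - 2 ^ (v2 z + 1) ∨ l1 z > w n - 3 * 2 ^ (v2 z)) := by
  set j := v2 z with hj
  set N := sInf {m : ℕ | |z.re| ≤ 2 ^ j * (w m - 2) ∧ |z.im| ≤ 2 ^ j * (w m - 2)} with hN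
  have hphi : phi z = if l1 z ≤ 2 ^ j * (w (N + 1) - 3) then N + 2 * j else N + 2 * j + 1 := rfl
  have hpow : (1:ℤ) ≤ 2 ^ j := one_le_pow₀ (by norm_num)
  have hpowpos : (0:ℤ) < 2 ^ j := by positivity
  -- membership characterization
  have hmem : ∀ m : ℕ, m ∈ {m : ℕ | |z.re| ≤ 2 ^ j * (w m - 2) ∧ |z.im| ≤ 2 ^ j * (w m - 2)} ↔
      linf z ≤ 2 ^ j * (w m - 2) := by
    intro m
    simp only [Set.mem_setOf_eq, linf, max_le_iff]
  have hne : {m : ℕ | |z.re| ≤ 2 ^ j * (w m - 2) ∧ |z.im| ≤ 2 ^ j * (w m - 2)}.Nonempty := by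
    refine ⟨2 * (linf z).toNat, (hmem _).mpr ?_⟩
    set k := (linf z).toNat with hk
    have hlk : linf z ≤ (k : ℤ) := Int.self_le_toNat _
    have hw : w (2 * k) = 3 * 2 ^ k := by
      unfold w
      have h1 : (2 * k) % 2 = 0 := by omega
      have h2 : (2 * k) / 2 = k := by omega
      simp [h1, h2]
    have hkpow : (k : ℤ) < 2 ^ k := by exact_mod_cast (Nat.lt_two_pow_self (n := k))
    have h1 : (1:ℤ) ≤ 2 ^ k := one_le_pow₀ (by norm_num)
    have : linf z ≤ w (2 * k) - 2 := by rw [hw]; linarith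
    calc linf z ≤ w (2 * k) - 2 := this
    _ ≤ 2 ^ j * (w (2 * k) - 2) := le_mul_of_one_le_left (by linarith [w_ge3 (2*k), hlk, linf_pos z hz]) hpow
  have hiff : ∀ m : ℕ, linf z ≤ 2 ^ j * (w m - 2) ↔ N ≤ m := by
    intro m
    constructor
    · intro h
      exact Nat.sInf_le ((hmem m).mpr h)
    · intro h
      have hNmem := Nat.sInf_mem hne
      rw [hmem] at hNmem
      have := w_mono h
      calc linf z ≤ 2 ^ j * (w N - 2) := hNmem
      _ ≤ 2 ^ j * (w m - 2) := by
          apply mul_le_mul_of_nonneg_left (by linarith) (le_of_lt hpowpos)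
  have hphi_ge : N + 2 * j ≤ phi z := by
    rw [hphi]; split <;> omega
  by_cases hcase : n ≤ 2 * j
  · -- both sides true
    have hlhs : phi z > n - 1 := by omega
    have hj1 : 1 ≤ j := by omega
    have hw1 : w (n - 1) ≤ w (2 * j - 1) := w_mono (by omega)
    have hw2 : w (2 * j - 1) = 2 ^ (j + 1) := by
      unfold w
      have h1 : (2 * j - 1) % 2 = 1 := by omega
      have h2 : (2 * j - 1) / 2 = j - 1 := by omega
      have h3 : j - 1 + 2 = j + 1 := by omega
      simp only [h1, h2]
      norm_num
      rw [← h3, pow_add]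
      ring
    have : linf z > w (n - 1) - 2 ^ (j + 1) := by
      have := linf_pos z hz
      omega
    exact iff_of_true hlhs (Or.inl this)
  · push_neg at hcase
    have h2j : 2 * j + 1 ≤ n := hcase
    -- rewrite w (n-1) and w n
    have hwn1 : w (n - 1) = 2 ^ j * w (n - 1 - 2 * j) := by
      rw [← w_shift]; congr 1; omega
    have hwn : w n = 2 ^ j * w (n - 2 * j) := by
      rw [← w_shift]; congr 1; omega
    have hd1 : (linf z > w (n - 1) - 2 ^ (j + 1)) ↔ n ≤ N + 2 * j := by
      have heq : w (n - 1) - 2 ^ (j + 1) = 2 ^ j * (w (n - 1 - 2 * j) - 2) := by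
        rw [hwn1, pow_succ]; ring
      rw [heq]
      constructor
      · intro h
        by_contra hc
        push_neg at hc
        have : N ≤ n - 1 - 2 * j := by omega
        have := (hiff _).mpr this
        omega
      · intro h
        have : ¬ (N ≤ n - 1 - 2 * j) := by omega
        rw [← hiff] at this
        omega
    have heqn : w n - 3 * 2 ^ j = 2 ^ j * (w (n - 2 * j) - 3) := by
      rw [hwn]; ring
    rw [hd1, heqn]
    by_cases hl : l1 z ≤ 2 ^ j * (w (N + 1) - 3)
    · have hpz : phi z = N + 2 * j := by rw [hphi, if_pos hl]
      constructor
      · intro h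
        left; omega
      · rintro (h | h)
        · omega
        · -- l1 > 2^j (w(n-2j)-3); derive N+2j ≥ n
          by_contra hc
          rw [hpz] at hc
          have hN1 : N + 1 ≤ n - 2 * j := by omega
          have := w_mono hN1
          have : 2 ^ j * (w (N + 1) - 3) ≤ 2 ^ j * (w (n - 2 * j) - 3) :=
            mul_le_mul_of_nonneg_left (by linarith) (le_of_lt hpowpos)
          linarith
    · have hpz : phi z = N + 2 * j + 1 := by rw [hphi, if_neg hl]
      push_neg at hl
      constructor
      · intro h
        rw [hpz] at h
        rcases Nat.lt_or_ge (N + 2 * j) n with h1 | h1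
        · -- N + 2j = n - 1
          have hNn : N + 1 = n - 2 * j := by omega
          right
          rw [← hNn]
          exact hl
        · left; omega
      · rintro (h | h)
        · omega
        · rw [hpz]
          by_contra hc
          -- N + 2j + 1 ≤ n - 1, so N ≤ n - 2 - 2j
          have hNle : N ≤ n - 2 - 2 * j := by omega
          have hn2 : 2 * j + 2 ≤ n := by omega
          have hNmem := Nat.sInf_mem hne
          rw [hmem] at hNmem
          have hmono := w_mono hNle
          have hlinf : linf z ≤ 2 ^ j * (w (n - 2 - 2 * j) - 2) := by
            calc linf z ≤ 2 ^ j * (w N - 2) := hNmem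
            _ ≤ _ := mul_le_mul_of_nonneg_left (by linarith) (le_of_lt hpowpos)
          have hww : w (n - 2 * j) = 2 * w (n - 2 - 2 * j) := by
            rw [← w_add_two]; congr 1; omega
          have hl1 := l1_le_two_linf z
          rw [hww] at h
          linarith
end
end
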